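/- There exists an instance of the zone tariff design problem whose PTN is a tree and whose bound is N = 2 with z*_MA < z*_MC: on the path graph with vertices v_1, v_2, v_3 and edges {v_1,v_2}, {v_2,v_3}, with OD pairs (v_1,v_2), (v_2,v_3), (v_1,v_3), each with one passenger, reference prices r_{(v_1,v_2)} = 1, r_{(v_2,v_3)} = 1, r_{(v_1,v_3)} = 2, and paths equal to the unique simple paths, the minimum objective over zone partitions with at most 2 arbitrary zones (multiple counting) equals 0, while the minimum over zone partitions with at most 2 connected zones (multiple counting) equals 1. -/
import Mathlib


open scoped Classical
noncomputable section

/-- A zone partition of the vertex set `V`: nonempty, pairwise disjoint zones covering `V`. -/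
def IsZonePartition {V : Type*} (Z : Finset (Finset V)) : Prop :=
  (∀ A ∈ Z, A.Nonempty) ∧ (∀ A ∈ Z, ∀ B ∈ Z, A ≠ B → Disjoint A B) ∧
    ∀ v : V, ∃ A ∈ Z, v ∈ A

/-- `v` and `w` lie in a common zone of `Z`. -/
def SameZone {V : Type*} (Z : Finset (Finset V)) (v w : V) : Prop :=
  ∃ A ∈ Z, v ∈ A ∧ w ∈ A

/-- Multiple-counting zone function: one plus the number of zone borders crossed along `W`. -/
def sigmaM {V : Type*} (Z : Finset (Finset V)) (W : List V) : ℕ :=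
  1 + ((W.zip W.tail).filter (fun p => decide (¬ SameZone Z p.1 p.2))).length

/-- Single-counting zone function: the number of distinct zones met by `W`. -/
def sigmaS {V : Type*} (Z : Finset (Finset V)) (W : List V) : ℕ :=
  (Z.filter (fun A => ∃ v ∈ W, v ∈ A)).card

/-- A zone is connected if the induced subgraph is connected. -/
def ZoneConnected {V : Type*} (G : SimpleGraph V) (A : Finset V) : Prop :=
  (G.induce (A : Set V)).Connected

/-- Objective value of the zone tariff design problem. -/
def zoneObj {V ι : Type*} (D : Finset ι) (r : ι → ℝ) (t : ι → ℕ) (Wd : ι → List V)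
    (σ : Finset (Finset V) → List V → ℕ) (Z : Finset (Finset V)) (P : ℕ → ℝ) : ℝ :=
  ∑ d ∈ D, (t d : ℝ) * |r d - P (σ Z (Wd d))|

/-- Optimal (infimum) objective value over all feasible zone partitions and
nonnegative price functions. -/
def zStar {V ι : Type*} (D : Finset ι) (r : ι → ℝ) (t : ι → ℕ) (Wd : ι → List V)
    (σ : Finset (Finset V) → List V → ℕ) (feas : Finset (Finset V) → Prop) : ℝ :=
  sInf {x : ℝ | ∃ Z P, feas Z ∧ (∀ k, 0 ≤ P k) ∧ x = zoneObj D r t Wd σ Z P}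

/-- The path graph on three vertices v_0 - v_1 - v_2. -/
def pathGraph3 : SimpleGraph (Fin 3) :=
  SimpleGraph.fromRel (fun i j => (i : ℕ) + 1 = (j : ℕ))

lemma sigmaM_pair {V : Type*} (Z : Finset (Finset V)) (u v : V) :
    sigmaM Z [u, v] = if SameZone Z u v then 1 else 2 := by
  by_cases h : SameZone Z u v <;> simp [sigmaM, h, List.filter]

lemma sigmaM_triple {V : Type*} (Z : Finset (Finset V)) (u v w : V) :
    sigmaM Z [u, v, w] =
      1 + ((if SameZone Z u v then 0 else 1) + (if SameZone Z v w then 0 else 1)) := by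
  by_cases h1 : SameZone Z u v <;> by_cases h2 : SameZone Z v w <;>
    simp [sigmaM, h1, h2, List.filter]

lemma obj_eval (Z : Finset (Finset (Fin 3))) (P : ℕ → ℝ) :
    zoneObj (Finset.univ : Finset (Fin 3)) (![1, 1, 2] : Fin 3 → ℝ) (fun _ => 1)
      ![([0, 1] : List (Fin 3)), [1, 2], [0, 1, 2]] sigmaM Z P =
      |1 - P (sigmaM Z [0, 1])| + (|1 - P (sigmaM Z [1, 2])| +
        |2 - P (sigmaM Z [0, 1, 2])|) := by
  simp [zoneObj, Fin.sum_univ_three, add_assoc]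

lemma zone_connected_01 : ZoneConnected pathGraph3 ({0, 1} : Finset (Fin 3)) := by
  haveI : Nonempty ((({0, 1} : Finset (Fin 3)) : Set (Fin 3))) := ⟨⟨0, by simp⟩⟩
  refine ⟨?_⟩
  rintro ⟨u, hu⟩ ⟨v, hv⟩
  simp at hu hv
  have hadj : pathGraph3.Adj 0 1 := by simp [pathGraph3]
  rcases hu with rfl | rfl <;> rcases hv with rfl | rfl
  · rfl
  · exact SimpleGraph.Adj.reachable (by simpa using hadj)
  · exact SimpleGraph.Adj.reachable (by simpa using hadj.symm)
  · rfl

lemma zone_connected_2 : ZoneConnected pathGraph3 ({2} : Finset (Fin 3)) := by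
  haveI : Nonempty ((({2} : Finset (Fin 3)) : Set (Fin 3))) := ⟨⟨2, by simp⟩⟩
  refine ⟨?_⟩
  rintro ⟨u, hu⟩ ⟨v, hv⟩
  simp at hu hv
  subst hu; subst hv; rfl

lemma no_disconnected_zone (A : Finset (Fin 3)) (h1 : (1 : Fin 3) ∉ A)
    (h0 : (0 : Fin 3) ∈ A) (h2 : (2 : Fin 3) ∈ A)
    (hc : ZoneConnected pathGraph3 A) : False := by
  have key : ∀ a b : Fin 3, a ≠ 1 → b ≠ 1 → ¬ pathGraph3.Adj a b := by
    intro a b; fin_cases a <;> fin_cases b <;> simp [pathGraph3]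
  have hbot : pathGraph3.induce (A : Set (Fin 3)) = ⊥ := by
    ext u v
    simp only [SimpleGraph.comap_adj, SimpleGraph.bot_adj, iff_false]
    exact key u.1 v.1 (fun h => h1 (by simpa [h] using u.2))
      (fun h => h1 (by simpa [h] using v.2))
  have hr := hc.preconnected ⟨0, by simpa using h0⟩ ⟨2, by simpa using h2⟩
  rw [hbot, SimpleGraph.reachable_bot] at hr
  simp at hr

lemma mc_no_double_split (Z : Finset (Finset (Fin 3))) (hZ : IsZonePartition Z)
    (hcard : Z.card ≤ 2) (hconn : ∀ A ∈ Z, ZoneConnected pathGraph3 A)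
    (h01 : ¬ SameZone Z 0 1) (h12 : ¬ SameZone Z 1 2) : False := by
  obtain ⟨hne, hdisj, hcov⟩ := hZ
  obtain ⟨A, hA, h0A⟩ := hcov 0
  obtain ⟨B, hB, h1B⟩ := hcov 1
  obtain ⟨C, hC, h2C⟩ := hcov 2
  have hAB : A ≠ B := fun h => h01 ⟨A, hA, h0A, by rw [h]; exact h1B⟩
  have hBC : B ≠ C := fun h => h12 ⟨B, hB, h1B, by rw [h]; exact h2C⟩
  have hAC : A = C := by
    by_contra hAC
    have hsub : ({A, B, C} : Finset (Finset (Fin 3))) ⊆ Z := by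
      intro x hx; simp at hx; rcases hx with rfl | rfl | rfl <;> assumption
    have h3 : ({A, B, C} : Finset (Finset (Fin 3))).card = 3 := by
      rw [Finset.card_insert_of_notMem (by simp [hAB, hAC]),
          Finset.card_insert_of_notMem (by simp [hBC]), Finset.card_singleton]
    have := Finset.card_le_card hsub
    omega
  have h1A : (1 : Fin 3) ∉ A := fun h => h01 ⟨A, hA, h0A, h⟩
  exact no_disconnected_zone A h1A h0A (by rw [hAC]; exact h2C) (hconn A hA)


lemma partA : IsZonePartition ({{0, 2}, {1}} : Finset (Finset (Fin 3))) := by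
  refine ⟨?_, ?_, ?_⟩
  · intro A hA; simp at hA; rcases hA with h | h <;> subst h <;> simp
  · intro A hA B hB hne; simp at hA hB
    rcases hA with h | h <;> rcases hB with h' | h' <;> subst h <;> subst h' <;>
      first
        | exact absurd rfl hne
        | (rw [Finset.disjoint_left]; intro a ha hb; revert ha hb; fin_cases a <;> simp)
  · intro v; fin_cases v <;> simp

lemma partC : IsZonePartition ({{0, 1}, {2}} : Finset (Finset (Fin 3))) := by
  refine ⟨?_, ?_, ?_⟩
  · intro A hA; simp at hA; rcases hA with h | h <;> subst h <;> simp
  · intro A hA B hB hne; simp at hA hB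
    rcases hA with h | h <;> rcases hB with h' | h' <;> subst h <;> subst h' <;>
      first
        | exact absurd rfl hne
        | (rw [Finset.disjoint_left]; intro a ha hb; revert ha hb; fin_cases a <;> simp)
  · intro v; fin_cases v <;> simp

lemma cardA : ({{0, 2}, {1}} : Finset (Finset (Fin 3))).card ≤ 2 :=
  Finset.card_insert_le _ _ |>.trans (by simp)

lemma cardC : ({{0, 1}, {2}} : Finset (Finset (Fin 3))).card ≤ 2 :=
  Finset.card_insert_le _ _ |>.trans (by simp)

lemma szA01 : ¬ SameZone ({{0, 2}, {1}} : Finset (Finset (Fin 3))) 0 1 := by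
  simp [SameZone]

lemma szA12 : ¬ SameZone ({{0, 2}, {1}} : Finset (Finset (Fin 3))) 1 2 := by
  simp [SameZone]

lemma szC01 : SameZone ({{0, 1}, {2}} : Finset (Finset (Fin 3))) 0 1 :=
  ⟨{0, 1}, by simp, by simp, by simp⟩

lemma szC12 : ¬ SameZone ({{0, 1}, {2}} : Finset (Finset (Fin 3))) 1 2 := by
  simp [SameZone]

lemma objA : zoneObj (Finset.univ : Finset (Fin 3)) (![1, 1, 2] : Fin 3 → ℝ) (fun _ => 1)
    ![([0, 1] : List (Fin 3)), [1, 2], [0, 1, 2]] sigmaM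
    ({{0, 2}, {1}} : Finset (Finset (Fin 3))) (fun k => if k ≤ 2 then 1 else 2) = 0 := by
  rw [obj_eval]
  simp only [sigmaM_pair, sigmaM_triple, szA01, szA12, ite_true, ite_false, if_neg, not_false_iff]
  norm_num

lemma objC : zoneObj (Finset.univ : Finset (Fin 3)) (![1, 1, 2] : Fin 3 → ℝ) (fun _ => 1)
    ![([0, 1] : List (Fin 3)), [1, 2], [0, 1, 2]] sigmaM
    ({{0, 1}, {2}} : Finset (Finset (Fin 3))) (fun _ => 1) = 1 := by
  rw [obj_eval]
  norm_num

lemma obj_nonneg (Z : Finset (Finset (Fin 3))) (P : ℕ → ℝ) :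
    0 ≤ zoneObj (Finset.univ : Finset (Fin 3)) (![1, 1, 2] : Fin 3 → ℝ) (fun _ => 1)
      ![([0, 1] : List (Fin 3)), [1, 2], [0, 1, 2]] sigmaM Z P := by
  apply Finset.sum_nonneg
  intro d _
  positivity

lemma obj_ge_one (Z : Finset (Finset (Fin 3))) (P : ℕ → ℝ) (hZ : IsZonePartition Z)
    (hcard : Z.card ≤ 2) (hconn : ∀ A ∈ Z, ZoneConnected pathGraph3 A) :
    1 ≤ zoneObj (Finset.univ : Finset (Fin 3)) (![1, 1, 2] : Fin 3 → ℝ) (fun _ => 1)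
      ![([0, 1] : List (Fin 3)), [1, 2], [0, 1, 2]] sigmaM Z P := by
  rw [obj_eval, sigmaM_pair, sigmaM_pair, sigmaM_triple]
  by_cases h01 : SameZone Z 0 1 <;> by_cases h12 : SameZone Z 1 2 <;>
    simp only [h01, h12, ite_true, ite_false]
  · norm_num
    linarith [neg_abs_le (1 - P 1), le_abs_self (2 - P 1), abs_nonneg (1 - P 1)]
  · norm_num
    linarith [neg_abs_le (1 - P 2), le_abs_self (2 - P 2), abs_nonneg (1 - P 1)]
  · norm_num
    linarith [neg_abs_le (1 - P 2), le_abs_self (2 - P 2), abs_nonneg (1 - P 1)]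
  · exact absurd (mc_no_double_split Z hZ hcard hconn h01 h12) not_false

/-- On the path graph with three vertices, OD pairs (v_0,v_1), (v_1,v_2), (v_0,v_2) with
one passenger each, reference prices 1, 1, 2 and the unique simple paths, and bound N = 2,
the optimal value with arbitrary zones and multiple counting is 0, while the optimal value
with connected zones and multiple counting is 1; hence z*_MA < z*_MC. -/
theorem example_MA_lt_MC :
    zStar (Finset.univ : Finset (Fin 3)) (![1, 1, 2] : Fin 3 → ℝ) (fun _ => 1)
        ![([0, 1] : List (Fin 3)), [1, 2], [0, 1, 2]] sigmaM
        (fun Z => IsZonePartition Z ∧ Z.card ≤ 2) = 0 ∧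
      zStar (Finset.univ : Finset (Fin 3)) (![1, 1, 2] : Fin 3 → ℝ) (fun _ => 1)
        ![([0, 1] : List (Fin 3)), [1, 2], [0, 1, 2]] sigmaM
        (fun Z => IsZonePartition Z ∧ Z.card ≤ 2 ∧ ∀ A ∈ Z, ZoneConnected pathGraph3 A)
          = 1 := by
  constructor
  · refine le_antisymm (csInf_le ⟨0, ?_⟩ ?_) (le_csInf ⟨0, ?_⟩ ?_)
    · rintro x ⟨Z, P, -, -, rfl⟩; exact obj_nonneg Z P
    · exact ⟨_, _, ⟨partA, cardA⟩, fun k => by split <;> norm_num, objA.symm⟩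
    · exact ⟨_, _, ⟨partA, cardA⟩, fun k => by split <;> norm_num, objA.symm⟩
    · rintro x ⟨Z, P, -, -, rfl⟩; exact obj_nonneg Z P
  · refine le_antisymm (csInf_le ⟨1, ?_⟩ ?_) (le_csInf ⟨1, ?_⟩ ?_)
    · rintro x ⟨Z, P, ⟨hZ, hcard, hconn⟩, -, rfl⟩; exact obj_ge_one Z P hZ hcard hconn
    · refine ⟨_, _, ⟨partC, cardC, ?_⟩, fun k => zero_le_one, objC.symm⟩
      intro A hA; simp at hA
      rcases hA with h | h <;> subst h
      · exact zone_connected_01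
      · exact zone_connected_2
    · refine ⟨_, _, ⟨partC, cardC, ?_⟩, fun k => zero_le_one, objC.symm⟩
      intro A hA; simp at hA
      rcases hA with h | h <;> subst h
      · exact zone_connected_01
      · exact zone_connected_2
    · rintro x ⟨Z, P, ⟨hZ, hcard, hconn⟩, -, rfl⟩; exact obj_ge_one Z P hZ hcard hconn

end
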